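/- Let d ≥ 2, let φ : ℝ^{d−1} → ℝ be a Lipschitz function, and let Σ = {(y, φ(y)) : y ∈ ℝ^{d−1}} ⊂ ℝ^d be its graph (a Lipschitz hypersurface). Then for every real s with −1 < s < 1, the function w(x) = dist(x, Σ)^s (the Euclidean distance from x to the set Σ, raised to the power s) is an A₂-Muckenhoupt weight on ℝ^d. -/

import Mathlib

set_option maxHeartbeats 1000000

open MeasureTheory Metric
open scoped NNReal ENNReal


private lemma absRpowII {t : ℝ} (ht : -1 < t) (a b : ℝ) :
    IntervalIntegrable (fun v => |v| ^ t) volume a b := by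
  suffices h0 : ∀ c : ℝ, 0 ≤ c → IntervalIntegrable (fun v => |v| ^ t) volume 0 c by
    have hc : ∀ c : ℝ, IntervalIntegrable (fun v => |v| ^ t) volume 0 c := by
      intro c
      rcases le_total 0 c with h | h
      · exact h0 c h
      · rw [IntervalIntegrable.iff_comp_neg]
        simp only [abs_neg, neg_zero]
        exact h0 (-c) (by linarith)
    exact (hc a).symm.trans (hc b)
  intro c hc
  rw [intervalIntegrable_iff_integrableOn_Ioo_of_le hc]
  have h1 : IntegrableOn (fun v : ℝ => v ^ t) (Set.Ioo 0 c) volume := by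
    rw [← intervalIntegrable_iff_integrableOn_Ioo_of_le hc]
    exact intervalIntegral.intervalIntegrable_rpow' ht
  exact h1.congr_fun (fun v hv => by rw [abs_of_pos hv.1]) measurableSet_Ioo

private lemma absRpowInt {t : ℝ} (ht : -1 < t) (a b : ℝ) :
    IntegrableOn (fun v => |v| ^ t) (Set.Ioo a b) volume := by
  rcases le_total a b with h | h
  · exact (intervalIntegrable_iff_integrableOn_Ioo_of_le h).mp (absRpowII ht a b)
  · rw [Set.Ioo_eq_empty (by intro hab; exact absurd (hab.trans_le h) (lt_irrefl a))]
    exact integrableOn_empty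

private lemma oneD_bound {t : ℝ} (ht : |t| < 1) {R m : ℝ} (hR : 0 < R) :
    ∫ v in Set.Ioo (m - R) (m + R), |v| ^ t ≤ 36 / (1 - |t|) * R * max R |m| ^ t := by
  have ht1 : -1 < t := neg_lt_of_abs_lt ht
  have ht2 : t < 1 := lt_of_abs_lt ht
  have habs : 1 - |t| ≤ 1 + t := by
    have := neg_abs_le t; linarith
  have h1t : 0 < 1 - |t| := by linarith
  have hM : (0:ℝ) < max R |m| := lt_of_lt_of_le hR (le_max_left _ _)
  have hpos : ∀ v : ℝ, 0 ≤ |v| ^ t := fun v => Real.rpow_nonneg (abs_nonneg v) t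
  by_cases hm : |m| ≤ 2 * R
  · -- interval near origin
    have hm' := abs_le.mp hm
    have hsub : Set.Ioo (m - R) (m + R) ⊆ Set.Ioo (-(3*R)) (3*R) := by
      intro v hv
      obtain ⟨h1, h2⟩ := hv
      constructor <;> [linarith [hm'.1]; linarith [hm'.2]]
    have step1 : ∫ v in Set.Ioo (m - R) (m + R), |v| ^ t
        ≤ ∫ v in Set.Ioo (-(3*R)) (3*R), |v| ^ t :=
      setIntegral_mono_set (absRpowInt ht1 _ _) (Filter.Eventually.of_forall hpos)
        (HasSubset.Subset.eventuallyLE hsub)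
    have e1 : ∫ v in (0:ℝ)..(3*R), |v| ^ t = (3*R) ^ (t+1) / (t+1) := by
      rw [intervalIntegral.integral_congr (g := fun v : ℝ => v ^ t)
        (fun v hv => by
          rw [Set.uIcc_of_le (by linarith : (0:ℝ) ≤ 3*R)] at hv
          simp only
          rw [abs_of_nonneg hv.1]),
        integral_rpow (Or.inl ht1), Real.zero_rpow (by linarith : t + 1 ≠ 0), sub_zero]
    have e2 : ∫ v in (-(3*R))..(0:ℝ), |v| ^ t = (3*R) ^ (t+1) / (t+1) := by
      have h := intervalIntegral.integral_comp_neg (a := 0) (b := 3*R) (fun v : ℝ => |v| ^ t)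
      simp only [abs_neg, neg_zero] at h
      rw [← h, e1]
    have step2 : ∫ v in Set.Ioo (-(3*R)) (3*R), |v| ^ t = 2 * ((3*R) ^ (t+1) / (t+1)) := by
      rw [← integral_Ioc_eq_integral_Ioo,
        ← intervalIntegral.integral_of_le (by linarith : -(3*R) ≤ 3*R),
        ← intervalIntegral.integral_add_adjacent_intervals
          (absRpowII ht1 (-(3*R)) 0) (absRpowII ht1 0 (3*R)), e1, e2]
      ring
    have key : (3*R) ^ t ≤ 6 * max R |m| ^ t := by
      rcases le_or_gt 0 t with h | h
      · have k1 : (3*R) ^ t ≤ (3 * max R |m|) ^ t :=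
          Real.rpow_le_rpow (by positivity) (by nlinarith [le_max_left R |m|]) h
        have k2 : (3 * max R |m|) ^ t = 3 ^ t * max R |m| ^ t :=
          Real.mul_rpow (by norm_num) hM.le
        have k3 : (3:ℝ) ^ t ≤ 3 ^ (1:ℝ) :=
          Real.rpow_le_rpow_of_exponent_le (by norm_num) ht2.le
        rw [Real.rpow_one] at k3
        have : max R |m| ^ t ≥ 0 := Real.rpow_nonneg hM.le t
        nlinarith
      · have k1 : (3*R) ^ t ≤ R ^ t :=
          Real.rpow_le_rpow_of_nonpos hR (by linarith) h.le
        have hM2 : max R |m| ≤ 2 * R := max_le (by linarith) hm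
        have k2 : R ^ t ≤ (max R |m| / 2) ^ t :=
          Real.rpow_le_rpow_of_nonpos (by positivity) (by linarith) h.le
        have k3 : (max R |m| / 2) ^ t = max R |m| ^ t / 2 ^ t :=
          Real.div_rpow hM.le (by norm_num : (0:ℝ) ≤ 2) t
        have k4 : (2:ℝ) ^ (-t) ≤ 2 ^ (1:ℝ) :=
          Real.rpow_le_rpow_of_exponent_le one_le_two (by linarith)
        rw [Real.rpow_one] at k4
        have k5 : max R |m| ^ t / 2 ^ t = max R |m| ^ t * 2 ^ (-t) := by
          rw [Real.rpow_neg (by norm_num : (0:ℝ) ≤ 2)]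
          ring
        have hMt : (0:ℝ) ≤ max R |m| ^ t := Real.rpow_nonneg hM.le t
        nlinarith [Real.rpow_nonneg (show (0:ℝ) ≤ 2 by norm_num) (-t)]
    calc ∫ v in Set.Ioo (m - R) (m + R), |v| ^ t
        ≤ 2 * ((3*R) ^ (t+1) / (t+1)) := step1.trans_eq step2
      _ ≤ 36 / (1 - |t|) * R * max R |m| ^ t := by
          rw [Real.rpow_add (by linarith : (0:ℝ) < 3*R), Real.rpow_one]
          have hMt : (0:ℝ) ≤ max R |m| ^ t := Real.rpow_nonneg hM.le t
          have h3Rt : (0:ℝ) ≤ (3*R) ^ t := Real.rpow_nonneg (by linarith) t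
          have l2 : 6*R*(3*R) ^ t ≤ 36*R*(max R |m|) ^ t := by nlinarith
          calc 2 * ((3 * R) ^ t * (3 * R) / (t + 1)) = 6*R*(3*R) ^ t / (t+1) := by ring
            _ ≤ 36*R*(max R |m|) ^ t / (1 - |t|) :=
                div_le_div₀ (by positivity) l2 h1t (by linarith)
            _ = 36 / (1 - |t|) * R * max R |m| ^ t := by ring
  · -- interval far from origin
    push_neg at hm
    have hMm : max R |m| = |m| := max_eq_right (by linarith)
    have key : ∀ v ∈ Set.Ioo (m - R) (m + R), |v| ^ t ≤ 2 * max R |m| ^ t := by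
      intro v hv
      rw [hMm]
      have hvm : |v - m| < R := by
        rw [abs_lt]; constructor <;> [linarith [hv.1]; linarith [hv.2]]
      have hlow : |m| - R ≤ |v| := by
        have := abs_sub_abs_le_abs_sub m v
        rw [abs_sub_comm] at this
        linarith
      have hup : |v| ≤ |m| + R := by
        have := abs_sub_abs_le_abs_sub v m
        linarith
      have hm0 : (0:ℝ) < |m| := by linarith
      have hmt : (0:ℝ) ≤ |m| ^ t := Real.rpow_nonneg hm0.le t
      rcases le_or_gt 0 t with h | h
      · have k1 : |v| ^ t ≤ (2 * |m|) ^ t :=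
          Real.rpow_le_rpow (abs_nonneg v) (by linarith) h
        have k2 : (2 * |m|) ^ t = 2 ^ t * |m| ^ t := Real.mul_rpow (by norm_num) hm0.le
        have k3 : (2:ℝ) ^ t ≤ 2 ^ (1:ℝ) :=
          Real.rpow_le_rpow_of_exponent_le one_le_two ht2.le
        rw [Real.rpow_one] at k3
        nlinarith
      · have k1 : |v| ^ t ≤ (|m| / 2) ^ t :=
          Real.rpow_le_rpow_of_nonpos (by positivity) (by linarith) h.le
        have k3 : (|m| / 2) ^ t = |m| ^ t / 2 ^ t := Real.div_rpow hm0.le (by norm_num : (0:ℝ) ≤ 2) t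
        have k4 : (2:ℝ) ^ (-t) ≤ 2 ^ (1:ℝ) :=
          Real.rpow_le_rpow_of_exponent_le one_le_two (by linarith)
        rw [Real.rpow_one] at k4
        have k5 : |m| ^ t / 2 ^ t = |m| ^ t * 2 ^ (-t) := by
          rw [Real.rpow_neg (by norm_num : (0:ℝ) ≤ 2)]; ring
        nlinarith [Real.rpow_nonneg (show (0:ℝ) ≤ 2 by norm_num) (-t)]
    have step : ∫ v in Set.Ioo (m - R) (m + R), |v| ^ t
        ≤ ∫ _v in Set.Ioo (m - R) (m + R), 2 * max R |m| ^ t := by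
      apply setIntegral_mono_on (absRpowInt (neg_lt_of_abs_lt ht) _ _)
        (integrableOn_const (by rw [Real.volume_Ioo]; exact ENNReal.ofReal_ne_top))
        measurableSet_Ioo key
    have comp : ∫ _v in Set.Ioo (m - R) (m + R), 2 * max R |m| ^ t
        = 2*R * (2 * max R |m| ^ t) := by
      rw [setIntegral_const, Real.volume_real_Ioo_of_le (by linarith), smul_eq_mul]
      ring_nf
    have hMt : (0:ℝ) ≤ max R |m| ^ t := Real.rpow_nonneg hM.le t
    have hc : 4 ≤ 36 / (1 - |t|) := by
      rw [le_div_iff₀ h1t]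
      nlinarith [abs_nonneg t]
    calc ∫ v in Set.Ioo (m - R) (m + R), |v| ^ t ≤ 2*R * (2 * max R |m| ^ t) :=
          step.trans_eq comp
      _ = 4 * R * max R |m| ^ t := by ring
      _ = 4 * (R * max R |m| ^ t) := by ring
      _ ≤ 36 / (1 - |t|) * (R * max R |m| ^ t) :=
          mul_le_mul_of_nonneg_right hc (mul_nonneg hR.le hMt)
      _ = 36 / (1 - |t|) * R * max R |m| ^ t := by ring

private lemma oneD_lintegral {t : ℝ} (ht : |t| < 1) {R m : ℝ} (hR : 0 < R) :
    ∫⁻ v in Set.Ioo (m - R) (m + R), ENNReal.ofReal (|v| ^ t)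
      ≤ ENNReal.ofReal (36 / (1 - |t|) * R * max R |m| ^ t) := by
  rw [← ofReal_integral_eq_lintegral_ofReal (absRpowInt (neg_lt_of_abs_lt ht) _ _)
    (Filter.Eventually.of_forall fun v => Real.rpow_nonneg (abs_nonneg v) t)]
  exact ENNReal.ofReal_le_ofReal (oneD_bound ht hR)

private lemma coord_abs_le_dist {n : ℕ} (x y : EuclideanSpace ℝ (Fin (n+1))) (i : Fin (n+1)) :
    |x i - y i| ≤ dist x y := by
  rw [EuclideanSpace.dist_eq]
  have h : |x i - y i| = Real.sqrt (dist (x i) (y i) ^ 2) := by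
    rw [Real.sqrt_sq dist_nonneg, Real.dist_eq]
  rw [h]
  exact Real.sqrt_le_sqrt (Finset.single_le_sum
    (f := fun j => dist (x j) (y j) ^ 2) (fun j _ => sq_nonneg _) (Finset.mem_univ i))

private def projE {n : ℕ} (x : EuclideanSpace ℝ (Fin (n+1))) : EuclideanSpace ℝ (Fin n) :=
  WithLp.toLp 2 (fun i : Fin n => x i.castSucc)

private lemma proj_dist_le_dist {n : ℕ} (x y : EuclideanSpace ℝ (Fin (n+1))) :
    dist (projE x) (projE y) ≤ dist x y := by
  calc dist (projE x) (projE y)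
      = Real.sqrt (∑ i : Fin n, dist (x i.castSucc) (y i.castSucc) ^ 2) :=
        EuclideanSpace.dist_eq (projE x) (projE y)
    _ ≤ Real.sqrt (∑ i : Fin (n+1), dist (x i) (y i) ^ 2) := by
        apply Real.sqrt_le_sqrt
        rw [Fin.sum_univ_castSucc (f := fun i : Fin (n+1) => dist (x i) (y i) ^ 2)]
        exact le_add_of_nonneg_right (sq_nonneg _)
    _ = dist x y := (EuclideanSpace.dist_eq x y).symm

private lemma dist_graphPoint {n : ℕ} (x : EuclideanSpace ℝ (Fin (n+1))) (a : ℝ) :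
    dist x (WithLp.toLp 2 (Fin.snoc (fun i : Fin n => x i.castSucc) a : Fin (n+1) → ℝ) : EuclideanSpace ℝ (Fin (n+1)))
      = |x (Fin.last n) - a| := by
  rw [EuclideanSpace.dist_eq]
  simp only [Fin.sum_univ_castSucc]
  simp [Fin.snoc_castSucc, Fin.snoc_last, Real.dist_eq, sq_abs, Real.sqrt_sq_eq_abs, WithLp.ofLp_toLp]



section Comparison

variable {n : ℕ} {φ : EuclideanSpace ℝ (Fin n) → ℝ} {L : ℝ≥0}
  {S : Set (EuclideanSpace ℝ (Fin (n + 1)))}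

private lemma graphPoint_mem (hS : S = {x : EuclideanSpace ℝ (Fin (n + 1)) |
      x (Fin.last n) = φ (WithLp.toLp 2 (fun i : Fin n => x i.castSucc))})
    (x : EuclideanSpace ℝ (Fin (n+1))) :
    (WithLp.toLp 2 (Fin.snoc (fun i : Fin n => x i.castSucc) (φ (projE x)) : Fin (n+1) → ℝ) : EuclideanSpace ℝ (Fin (n+1))) ∈ S := by
  subst hS
  show (Fin.snoc (fun i : Fin n => x i.castSucc) (φ (projE x)) : Fin (n+1) → ℝ) (Fin.last n) = φ _
  rw [Fin.snoc_last]
  congr 1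
  simp [projE, Fin.snoc_castSucc]

private lemma infDist_le_rho (hS : S = {x : EuclideanSpace ℝ (Fin (n + 1)) |
      x (Fin.last n) = φ (WithLp.toLp 2 (fun i : Fin n => x i.castSucc))})
    (x : EuclideanSpace ℝ (Fin (n+1))) :
    infDist x S ≤ |x (Fin.last n) - φ (projE x)| := by
  have h : infDist x S ≤ dist x
      (WithLp.toLp 2 (Fin.snoc (fun i : Fin n => x i.castSucc) (φ (projE x)) : Fin (n+1) → ℝ) : EuclideanSpace ℝ (Fin (n+1))) :=
    infDist_le_dist_of_mem (graphPoint_mem hS x)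
  rwa [dist_graphPoint x (φ (projE x))] at h

private lemma rho_le_infDist (hφ : LipschitzWith L φ)
    (hS : S = {x : EuclideanSpace ℝ (Fin (n + 1)) |
      x (Fin.last n) = φ (WithLp.toLp 2 (fun i : Fin n => x i.castSucc))})
    (x : EuclideanSpace ℝ (Fin (n+1))) :
    |x (Fin.last n) - φ (projE x)| ≤ (1 + (L:ℝ)) * infDist x S := by
  have hne : S.Nonempty := ⟨_, graphPoint_mem hS x⟩
  have hK : (0:ℝ) < 1 + (L:ℝ) := by positivity
  by_contra hcon
  push_neg at hcon
  have h1 : infDist x S < |x (Fin.last n) - φ (projE x)| / (1 + (L:ℝ)) := by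
    rw [lt_div_iff₀ hK]
    calc infDist x S * (1 + (L:ℝ)) = (1 + (L:ℝ)) * infDist x S := by ring
      _ < |x (Fin.last n) - φ (projE x)| := hcon
  obtain ⟨q, hq, hlt⟩ := (infDist_lt_iff hne).mp h1
  have hq' : q (Fin.last n) = φ (projE q) := by
    rw [hS] at hq; exact hq
  have key : |x (Fin.last n) - φ (projE x)| ≤ (1 + (L:ℝ)) * dist x q := by
    have t1 : |x (Fin.last n) - q (Fin.last n)| ≤ dist x q := coord_abs_le_dist x q _
    have t2 : |φ (projE q) - φ (projE x)| ≤ (L:ℝ) * dist x q := by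
      have := hφ.dist_le_mul (projE q) (projE x)
      rw [Real.dist_eq] at this
      exact this.trans (by
        have := proj_dist_le_dist q x
        rw [dist_comm q x] at this
        nlinarith [NNReal.coe_nonneg L])
    calc |x (Fin.last n) - φ (projE x)|
        = |(x (Fin.last n) - q (Fin.last n)) + (φ (projE q) - φ (projE x))| := by rw [hq']; ring_nf
      _ ≤ |x (Fin.last n) - q (Fin.last n)| + |φ (projE q) - φ (projE x)| := abs_add_le _ _
      _ ≤ (1 + (L:ℝ)) * dist x q := by linarith
  have : (1 + (L:ℝ)) * dist x q < |x (Fin.last n) - φ (projE x)| := by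
    calc (1 + (L:ℝ)) * dist x q
        < (1 + (L:ℝ)) * (|x (Fin.last n) - φ (projE x)| / (1 + (L:ℝ))) := by
          apply mul_lt_mul_of_pos_left hlt hK
      _ = |x (Fin.last n) - φ (projE x)| := by field_simp
  linarith

end Comparison



private noncomputable def splitEquiv (n : ℕ) :
    EuclideanSpace ℝ (Fin (n+1)) ≃ᵐ ℝ × EuclideanSpace ℝ (Fin n) :=
  (MeasurableEquiv.toLp 2 (Fin (n+1) → ℝ)).symm.trans
    ((MeasurableEquiv.piFinSuccAbove (fun _ => ℝ) (Fin.last n)).trans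
      ((MeasurableEquiv.refl ℝ).prodCongr (MeasurableEquiv.toLp 2 (Fin n → ℝ)).symm.symm))

private lemma splitEquiv_apply {n : ℕ} (x : EuclideanSpace ℝ (Fin (n+1))) :
    splitEquiv n x = (x (Fin.last n), projE x) := by
  apply Prod.ext
  · rfl
  · apply PiLp.ext; intro i
    show x ((Fin.last n).succAbove i) = x i.castSucc
    rw [Fin.succAbove_last]

private lemma measurePreserving_splitEquiv (n : ℕ) :
    MeasurePreserving (⇑(splitEquiv n)) volume volume := by
  have h1 := EuclideanSpace.volume_preserving_symm_measurableEquiv_toLp (Fin (n+1))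
  have h2 := measurePreserving_piFinSuccAbove (fun _ : Fin (n+1) => (volume : Measure ℝ))
    (Fin.last n)
  have h2' : MeasurePreserving
      (⇑(MeasurableEquiv.piFinSuccAbove (fun _ : Fin (n+1) => ℝ) (Fin.last n)))
      volume volume := by
    have e1 : (volume : Measure (Fin (n+1) → ℝ)) = Measure.pi (fun _ => volume) := volume_pi
    have e2 : (volume : Measure (ℝ × (Fin n → ℝ)))
        = (volume : Measure ℝ).prod (Measure.pi fun _ => volume) := by
      rw [Measure.volume_eq_prod, volume_pi]
    rw [e1, e2]
    exact h2
  have h3 : MeasurePreserving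
      (⇑((MeasurableEquiv.refl ℝ).prodCongr (MeasurableEquiv.toLp 2 (Fin n → ℝ)).symm.symm))
      volume volume := by
    have e3 : (volume : Measure (ℝ × (Fin n → ℝ))) = volume.prod volume :=
      Measure.volume_eq_prod _ _
    have e4 : (volume : Measure (ℝ × EuclideanSpace ℝ (Fin n))) = volume.prod volume :=
      Measure.volume_eq_prod _ _
    rw [e3, e4]
    exact (MeasurePreserving.id _).prod
      (EuclideanSpace.volume_preserving_symm_measurableEquiv_toLp (Fin n)).symm
  exact h3.comp (h2'.comp h1)

private lemma measurable_g {n : ℕ} {φ : EuclideanSpace ℝ (Fin n) → ℝ} {L : ℝ≥0}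
    (hφ : LipschitzWith L φ) (t : ℝ) :
    Measurable (fun p : ℝ × EuclideanSpace ℝ (Fin n) =>
      ENNReal.ofReal (|p.1 - φ p.2| ^ t)) := by
  apply ENNReal.measurable_ofReal.comp
  apply Measurable.pow_const
  exact (measurable_fst.sub (hφ.continuous.measurable.comp measurable_snd)).abs

private lemma core_bound {n : ℕ} {φ : EuclideanSpace ℝ (Fin n) → ℝ} {L : ℝ≥0}
    (hφ : LipschitzWith L φ) {t : ℝ} (ht : |t| < 1)
    (c : EuclideanSpace ℝ (Fin (n+1))) {r : ℝ} (hr : 0 < r) :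
    ∫⁻ x in ball c r, ENNReal.ofReal (|x (Fin.last n) - φ (projE x)| ^ t)
      ≤ volume (ball (0 : EuclideanSpace ℝ (Fin n)) r) *
        ENNReal.ofReal (36 / (1 - |t|) * ((1+(L:ℝ))*r) *
          max ((1+(L:ℝ))*r) |c (Fin.last n) - φ (projE c)| ^ t) := by
  set K : ℝ := 1 + (L:ℝ) with hK
  have hK1 : (1:ℝ) ≤ K := by rw [hK]; linarith [NNReal.coe_nonneg L]
  have hKr : 0 < K * r := by nlinarith
  set m : ℝ := c (Fin.last n) - φ (projE c) with hm
  set I : Set ℝ := Set.Ioo (c (Fin.last n) - r) (c (Fin.last n) + r) with hI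
  set B' : Set (EuclideanSpace ℝ (Fin n)) := ball (projE c) r with hB'
  set g : ℝ × EuclideanSpace ℝ (Fin n) → ℝ≥0∞ :=
    fun p => ENNReal.ofReal (|p.1 - φ p.2| ^ t) with hg
  -- step 1 : ball is inside the preimage of the cylinder
  have hsub : ball c r ⊆ (⇑(splitEquiv n)) ⁻¹' (I ×ˢ B') := by
    intro x hx
    rw [mem_ball] at hx
    rw [Set.mem_preimage, splitEquiv_apply]
    constructor
    · have := coord_abs_le_dist x c (Fin.last n)
      have habs := abs_lt.mp (lt_of_le_of_lt this hx)
      exact ⟨by linarith [habs.1], by linarith [habs.2]⟩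
    · rw [hB', mem_ball]
      exact lt_of_le_of_lt (proj_dist_le_dist x c) hx
  -- step 2 : transfer to the product space
  have step2 : ∫⁻ x in ball c r, ENNReal.ofReal (|x (Fin.last n) - φ (projE x)| ^ t)
      ≤ ∫⁻ p in I ×ˢ B', g p ∂(volume : Measure (ℝ × EuclideanSpace ℝ (Fin n))) := by
    have e : ∫⁻ x in (⇑(splitEquiv n)) ⁻¹' (I ×ˢ B'), g (splitEquiv n x)
        = ∫⁻ p in I ×ˢ B', g p ∂(volume : Measure (ℝ × EuclideanSpace ℝ (Fin n))) :=
      (measurePreserving_splitEquiv n).setLIntegral_comp_preimage_emb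
        (splitEquiv n).measurableEmbedding g (I ×ˢ B')
    rw [← e]
    have : ∀ x : EuclideanSpace ℝ (Fin (n+1)),
        ENNReal.ofReal (|x (Fin.last n) - φ (projE x)| ^ t) = g (splitEquiv n x) := by
      intro x; rw [splitEquiv_apply]
    simp_rw [this]
    exact lintegral_mono_set hsub
  -- step 3 : Tonelli
  have step3 : ∫⁻ p in I ×ˢ B', g p ∂(volume : Measure (ℝ × EuclideanSpace ℝ (Fin n)))
      = ∫⁻ y in B', ∫⁻ u in I, g (u, y) := by
    rw [Measure.volume_eq_prod, ← Measure.prod_restrict]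
    exact MeasureTheory.lintegral_prod_symm g (measurable_g hφ t).aemeasurable
  -- step 4 : inner integral bound
  have step4 : ∀ y ∈ B', ∫⁻ u in I, g (u, y)
      ≤ ENNReal.ofReal (36 / (1 - |t|) * (K*r) * max (K*r) |m| ^ t) := by
    intro y hy
    have hy' : dist (φ y) (φ (projE c)) ≤ (L:ℝ) * r := by
      calc dist (φ y) (φ (projE c)) ≤ (L:ℝ) * dist y (projE c) := hφ.dist_le_mul _ _
        _ ≤ (L:ℝ) * r :=
            mul_le_mul_of_nonneg_left (le_of_lt (mem_ball.mp hy)) (NNReal.coe_nonneg L)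
    -- translate
    have etrans : ∫⁻ u in I, g (u, y)
        = ∫⁻ v in (fun v : ℝ => v + φ y) ⁻¹' I, ENNReal.ofReal (|v| ^ t) := by
      have emb : MeasurableEmbedding (fun v : ℝ => v + φ y) :=
        (MeasurableEquiv.addRight (φ y)).measurableEmbedding
      have e := (measurePreserving_add_right volume (φ y)).setLIntegral_comp_preimage_emb
        emb (fun u => ENNReal.ofReal (|u - φ y| ^ t)) I
      simp only [add_sub_cancel_right] at e
      rw [hg]
      exact e.symm
    have hpre : (fun v : ℝ => v + φ y) ⁻¹' I ⊆ Set.Ioo (m - K*r) (m + K*r) := by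
      intro v hv
      simp only [hI, Set.mem_preimage, Set.mem_Ioo] at hv
      have hd : |φ y - φ (projE c)| ≤ (L:ℝ) * r := by
        rw [← Real.dist_eq]; exact hy'
      have hd' := abs_le.mp hd
      rw [Set.mem_Ioo, hm, hK]
      constructor
      · nlinarith [hd'.1, hd'.2, hv.1, hv.2]
      · nlinarith [hd'.1, hd'.2, hv.1, hv.2]
    calc ∫⁻ u in I, g (u, y)
        = ∫⁻ v in (fun v : ℝ => v + φ y) ⁻¹' I, ENNReal.ofReal (|v| ^ t) := etrans
      _ ≤ ∫⁻ v in Set.Ioo (m - K*r) (m + K*r), ENNReal.ofReal (|v| ^ t) :=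
          lintegral_mono_set hpre
      _ ≤ ENNReal.ofReal (36 / (1 - |t|) * (K*r) * max (K*r) |m| ^ t) :=
          oneD_lintegral ht hKr
  -- step 5 : outer integral
  have step5 : ∫⁻ y in B', ∫⁻ u in I, g (u, y)
      ≤ volume (ball (0 : EuclideanSpace ℝ (Fin n)) r) *
        ENNReal.ofReal (36 / (1 - |t|) * (K*r) * max (K*r) |m| ^ t) := by
    calc ∫⁻ y in B', ∫⁻ u in I, g (u, y)
        ≤ ∫⁻ _y in B', ENNReal.ofReal (36 / (1 - |t|) * (K*r) * max (K*r) |m| ^ t) :=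
          setLIntegral_mono measurable_const step4
      _ = ENNReal.ofReal (36 / (1 - |t|) * (K*r) * max (K*r) |m| ^ t) * volume B' := by
          rw [setLIntegral_const]
      _ = volume (ball (0 : EuclideanSpace ℝ (Fin n)) r) *
          ENNReal.ofReal (36 / (1 - |t|) * (K*r) * max (K*r) |m| ^ t) := by
          rw [hB', Measure.addHaar_ball_center volume (projE c) r, mul_comm]
  exact step2.trans (step3.trans_le step5)



/-- Let `d = n + 1 ≥ 2`, let `φ : ℝ^{d-1} → ℝ` be Lipschitz and let
`S = {(y, φ y) : y ∈ ℝ^{d-1}} ⊂ ℝ^d` be its graph (a Lipschitz hypersurface).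
Then for every real `s` with `-1 < s < 1`, the function `w x = dist(x, S) ^ s` is an
`A₂`-Muckenhoupt weight on `ℝ^d`. -/
theorem dist_to_lipschitz_graph_pow_is_A2_weight
    (n : ℕ) (hn : 1 ≤ n) (φ : EuclideanSpace ℝ (Fin n) → ℝ) (L : ℝ≥0)
    (hφ : LipschitzWith L φ) (s : ℝ) (hs₁ : -1 < s) (hs₂ : s < 1)
    (S : Set (EuclideanSpace ℝ (Fin (n + 1))))
    (hS : S = {x : EuclideanSpace ℝ (Fin (n + 1)) |
      x (Fin.last n) = φ (WithLp.toLp 2 (fun i : Fin n => x i.castSucc))}) :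
    LocallyIntegrable (fun x : EuclideanSpace ℝ (Fin (n + 1)) => infDist x S ^ s) volume ∧
    LocallyIntegrable (fun x : EuclideanSpace ℝ (Fin (n + 1)) => (infDist x S ^ s)⁻¹) volume ∧
    ∃ C > (0 : ℝ), ∀ (c : EuclideanSpace ℝ (Fin (n + 1))) (r : ℝ), 0 < r →
      (⨍ x in ball c r, infDist x S ^ s) * (⨍ x in ball c r, (infDist x S ^ s)⁻¹) ≤ C := by
  have hs : |s| < 1 := abs_lt.mpr ⟨hs₁, hs₂⟩
  have hns : |-s| < 1 := by rwa [abs_neg]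
  set K : ℝ := 1 + (L:ℝ) with hKdef
  have hK1 : (1:ℝ) ≤ K := by rw [hKdef]; linarith [NNReal.coe_nonneg L]
  have hK0 : (0:ℝ) < K := by linarith
  set ρ : EuclideanSpace ℝ (Fin (n+1)) → ℝ :=
    fun x => |x (Fin.last n) - φ (projE x)| with hρdef
  -- rewrite the inverse weight as a power
  have hinv : (fun x : EuclideanSpace ℝ (Fin (n+1)) => (infDist x S ^ s)⁻¹)
      = fun x => infDist x S ^ (-s) :=
    funext fun x => (Real.rpow_neg infDist_nonneg s).symm
  -- pointwise comparison
  have hpt : ∀ t : ℝ, |t| ≤ 1 → ∀ x, infDist x S ^ t ≤ K * ρ x ^ t := by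
    intro t ht x
    have h1 : infDist x S ≤ ρ x := infDist_le_rho hS x
    have h2 : ρ x ≤ K * infDist x S := rho_le_infDist hφ hS x
    have hρn : 0 ≤ ρ x := abs_nonneg _
    rcases eq_or_lt_of_le hρn with hρ0 | hρpos
    · have hinf0 : infDist x S = 0 := le_antisymm (hρ0 ▸ h1) infDist_nonneg
      rw [hinf0, ← hρ0]
      exact le_mul_of_one_le_left (Real.rpow_nonneg le_rfl t) hK1
    · rcases le_or_gt 0 t with htpos | htneg
      · calc infDist x S ^ t ≤ ρ x ^ t := Real.rpow_le_rpow infDist_nonneg h1 htpos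
          _ ≤ K * ρ x ^ t := le_mul_of_one_le_left (Real.rpow_nonneg hρn t) hK1
      · have hlow : ρ x / K ≤ infDist x S := by
          rw [div_le_iff₀ hK0]
          calc ρ x ≤ K * infDist x S := h2
            _ = infDist x S * K := mul_comm _ _
        have h3 : infDist x S ^ t ≤ (ρ x / K) ^ t :=
          Real.rpow_le_rpow_of_nonpos (by positivity) hlow htneg.le
        have h4 : (ρ x / K) ^ t = ρ x ^ t * K ^ (-t) := by
          rw [Real.div_rpow hρn hK0.le t, Real.rpow_neg hK0.le]
          ring
        have h5 : K ^ (-t) ≤ K := by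
          have := Real.rpow_le_rpow_of_exponent_le hK1
            (show -t ≤ (1:ℝ) by cases abs_le.mp ht; linarith)
          rwa [Real.rpow_one] at this
        calc infDist x S ^ t ≤ ρ x ^ t * K ^ (-t) := h4 ▸ h3
          _ ≤ ρ x ^ t * K := mul_le_mul_of_nonneg_left h5 (Real.rpow_nonneg hρn t)
          _ = K * ρ x ^ t := mul_comm _ _
  have hmeas : ∀ t : ℝ, Measurable
      (fun x : EuclideanSpace ℝ (Fin (n+1)) => infDist x S ^ t) :=
    fun t => measurable_infDist.pow_const t
  have hwnn : ∀ (t : ℝ) (x : EuclideanSpace ℝ (Fin (n+1))), 0 ≤ infDist x S ^ t :=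
    fun t x => Real.rpow_nonneg infDist_nonneg t
  -- volume constants
  set Vn : ℝ := (volume (ball (0 : EuclideanSpace ℝ (Fin n)) 1)).toReal with hVndef
  set V1 : ℝ := (volume (ball (0 : EuclideanSpace ℝ (Fin (n+1))) 1)).toReal with hV1def
  have hVn : 0 < Vn := ENNReal.toReal_pos (measure_ball_pos _ _ one_pos).ne'
    measure_ball_lt_top.ne
  have hV1 : 0 < V1 := ENNReal.toReal_pos (measure_ball_pos _ _ one_pos).ne'
    measure_ball_lt_top.ne
  obtain ⟨k, rfl⟩ : ∃ k, n = k + 1 := ⟨n - 1, by omega⟩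
  -- main lintegral estimate
  have hA : ∀ (t : ℝ), |t| < 1 → ∀ (c : EuclideanSpace ℝ (Fin (k+1+1))) (r : ℝ), 0 < r →
      ∫⁻ x in ball c r, ENNReal.ofReal (infDist x S ^ t)
        ≤ ENNReal.ofReal (K * (r ^ (k+1) * Vn *
            (36 / (1 - |t|) * (K*r) *
              max (K*r) |c (Fin.last (k+1)) - φ (projE c)| ^ t))) := by
    intro t ht c r hr
    have l1 : ∫⁻ x in ball c r, ENNReal.ofReal (infDist x S ^ t)
        ≤ ∫⁻ x in ball c r, ENNReal.ofReal K * ENNReal.ofReal (ρ x ^ t) := by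
      apply lintegral_mono
      intro x
      exact (ENNReal.ofReal_le_ofReal (hpt t ht.le x)).trans
        (le_of_eq (ENNReal.ofReal_mul hK0.le))
    rw [lintegral_const_mul' _ _ ENNReal.ofReal_ne_top] at l1
    have l2 := core_bound hφ ht c hr
    have l3 : volume (ball (0 : EuclideanSpace ℝ (Fin (k+1))) r)
        = ENNReal.ofReal (r ^ (k+1)) * ENNReal.ofReal Vn := by
      rw [Measure.addHaar_ball volume 0 hr.le, hVndef,
        ENNReal.ofReal_toReal measure_ball_lt_top.ne, finrank_euclideanSpace_fin]
    calc ∫⁻ x in ball c r, ENNReal.ofReal (infDist x S ^ t)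
        ≤ ENNReal.ofReal K * ∫⁻ x in ball c r, ENNReal.ofReal (ρ x ^ t) := l1
      _ ≤ ENNReal.ofReal K * (ENNReal.ofReal (r ^ (k+1)) * ENNReal.ofReal Vn *
            ENNReal.ofReal (36 / (1 - |t|) * (K*r) *
              max (K*r) |c (Fin.last (k+1)) - φ (projE c)| ^ t)) := by
          rw [← l3]
          exact mul_le_mul_right l2 _
      _ = ENNReal.ofReal (K * (r ^ (k+1) * Vn *
            (36 / (1 - |t|) * (K*r) *
              max (K*r) |c (Fin.last (k+1)) - φ (projE c)| ^ t))) := by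
          rw [ENNReal.ofReal_mul hK0.le, ENNReal.ofReal_mul (by positivity : (0:ℝ) ≤ r ^ (k+1) * Vn),
            ENNReal.ofReal_mul (by positivity : (0:ℝ) ≤ r ^ (k+1))]
  -- local integrability
  have hLI : ∀ t : ℝ, |t| < 1 → LocallyIntegrable
      (fun x : EuclideanSpace ℝ (Fin (k+1+1)) => infDist x S ^ t) volume := by
    intro t ht
    rw [locallyIntegrable_iff]
    intro kk hkk
    obtain ⟨R0, hR0⟩ := hkk.isBounded.subset_ball 0
    have hball : IntegrableOn (fun x : EuclideanSpace ℝ (Fin (k+1+1)) => infDist x S ^ t)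
        (ball 0 (max R0 1)) volume := by
      constructor
      · exact (hmeas t).aestronglyMeasurable
      · rw [hasFiniteIntegral_iff_ofReal (Filter.Eventually.of_forall (hwnn t))]
        exact lt_of_le_of_lt (hA t ht 0 (max R0 1) (lt_of_lt_of_le one_pos (le_max_right _ _)))
          ENNReal.ofReal_lt_top
    exact hball.mono_set (hR0.trans (ball_subset_ball (le_max_left _ _)))
  refine ⟨hLI s hs, ?_, ?_⟩
  · rw [hinv]; exact hLI (-s) hns
  -- the A₂ condition
  have hC₁ : (0:ℝ) < 36 / (1 - |s|) := by
    apply div_pos (by norm_num); linarith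
  refine ⟨(K^2 * (36 / (1 - |s|)) * Vn / V1)^2, by positivity, ?_⟩
  intro c r hr
  set M : ℝ := max (K*r) |c (Fin.last (k+1)) - φ (projE c)| with hMdef
  have hM : 0 < M := lt_of_lt_of_le (by nlinarith) (le_max_left _ _)
  set D : ℝ → ℝ := fun t => K * (r ^ (k+1) * Vn * (36 / (1 - |t|) * (K*r) * M ^ t)) with hDdef
  have hDnn : ∀ t, |t| < 1 → 0 ≤ D t := by
    intro t ht
    have h1 : (0:ℝ) < 1 - |t| := by linarith
    have := Real.rpow_nonneg hM.le t
    rw [hDdef]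
    positivity
  -- integrals and their bounds
  have hInt : ∀ t : ℝ, |t| < 1 →
      (∫ x in ball c r, infDist x S ^ t) ≤ D t ∧ 0 ≤ ∫ x in ball c r, infDist x S ^ t := by
    intro t ht
    have heq : (∫ x in ball c r, infDist x S ^ t)
        = (∫⁻ x in ball c r, ENNReal.ofReal (infDist x S ^ t)).toReal :=
      integral_eq_lintegral_of_nonneg_ae (Filter.Eventually.of_forall (hwnn t))
        (hmeas t).aestronglyMeasurable
    constructor
    · rw [heq]
      exact ENNReal.toReal_le_of_le_ofReal (hDnn t ht) (hA t ht c r hr)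
    · rw [heq]; exact ENNReal.toReal_nonneg
  have hDs := hInt s hs
  have hDns := hInt (-s) hns
  -- volume of the big ball
  have hν : (volume (ball c r)).toReal = r ^ (k+1+1) * V1 := by
    rw [Measure.addHaar_ball_center volume c r, Measure.addHaar_ball volume 0 hr.le,
      finrank_euclideanSpace_fin, hV1def, ENNReal.toReal_mul,
      ENNReal.toReal_ofReal (by positivity)]
  have hνpos : (0:ℝ) < r ^ (k+1+1) * V1 := by positivity
  -- product of the D's
  have hDD : D s * D (-s) = ((K^2 * (36 / (1 - |s|)) * Vn / V1)^2) * (r ^ (k+1+1) * V1)^2 := by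
    have hMs : M ^ s * M ^ (-s) = 1 := by
      rw [← Real.rpow_add hM, add_neg_cancel, Real.rpow_zero]
    have habs : |(-s)| = |s| := abs_neg s
    have e1 : D s * D (-s)
        = (K * (r^(k+1) * Vn * (36 / (1 - |s|) * (K*r))))^2 * (M ^ s * M ^ (-s)) := by
      rw [hDdef]; simp only [habs]; ring
    rw [e1, hMs, mul_one, ← mul_pow]
    congr 1
    rw [show (K^2 * (36 / (1 - |s|)) * Vn / V1) * (r ^ (k+1+1) * V1)
        = K^2 * (36 / (1 - |s|)) * Vn * r ^ (k+1+1) * (V1 / V1) from by ring,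
      div_self hV1.ne', mul_one, pow_succ r (k+1)]
    ring
  -- conclude
  rw [hinv, setAverage_eq, setAverage_eq, smul_eq_mul, smul_eq_mul, measureReal_def, hν]
  calc (r ^ (k+1+1) * V1)⁻¹ * (∫ x in ball c r, infDist x S ^ s) *
        ((r ^ (k+1+1) * V1)⁻¹ * ∫ x in ball c r, infDist x S ^ (-s))
      = (∫ x in ball c r, infDist x S ^ s) * (∫ x in ball c r, infDist x S ^ (-s)) /
          (r ^ (k+1+1) * V1)^2 := by ring
    _ ≤ D s * D (-s) / (r ^ (k+1+1) * V1)^2 := by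
        exact (div_le_div_iff_of_pos_right (by positivity)).mpr
          (mul_le_mul hDs.1 hDns.1 hDns.2 (hDnn s hs))
    _ = (K^2 * (36 / (1 - |s|)) * Vn / V1)^2 := by
        rw [hDD, mul_div_assoc, div_self (by positivity : ((r ^ (k+1+1) * V1)^2) ≠ (0:ℝ)),
          mul_one]
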